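/- Let V, Ṽ : [0,1]ⁿ → ℝ be continuous, let θ > 0, and set S_θ := { x ∈ (0,1)ⁿ : V(x) ≥ inf_{[0,1]ⁿ} V + θ }. Let (T_k) and (Γ_k) be sequences with T_k > 0, Γ_k ≥ 0, T_k → 0 and Γ_k/T_k → 0 as k → ∞. Then lim_{k→∞} [ ∫_{S_θ} exp(−(V(x) − Γ_k Ṽ(x))/T_k) dx ] / [ ∫_{(0,1)ⁿ} exp(−(V(x) − Γ_k Ṽ(x))/T_k) dx ] = 0. -/

import Mathlib

open MeasureTheory Real Set Filter Topology

/-- if `T_k → 0` and `Γ_k/T_k → 0`, the Gibbs-like distribution of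
`V - Γ_k Ṽ` at temperature `T_k` gives vanishing probability to
`S_θ = {x : V(x) ≥ inf V + θ}`. -/
theorem gibbs_like_concentration_joint
    (n : ℕ) (V Vt : (Fin n → ℝ) → ℝ)
    (hV : ContinuousOn V (Set.pi Set.univ fun _ : Fin n => Set.Icc (0 : ℝ) 1))
    (hVt : ContinuousOn Vt (Set.pi Set.univ fun _ : Fin n => Set.Icc (0 : ℝ) 1))
    (θ : ℝ) (hθ : 0 < θ)
    (T Γ : ℕ → ℝ) (hT : ∀ k, 0 < T k) (hΓ : ∀ k, 0 ≤ Γ k)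
    (hTlim : Tendsto T atTop (𝓝 0))
    (hratio : Tendsto (fun k => Γ k / T k) atTop (𝓝 0)) :
    let cube : Set (Fin n → ℝ) := Set.pi Set.univ fun _ : Fin n => Set.Ioo (0 : ℝ) 1
    let closedCube : Set (Fin n → ℝ) := Set.pi Set.univ fun _ : Fin n => Set.Icc (0 : ℝ) 1
    let S : Set (Fin n → ℝ) := {x ∈ cube | sInf (V '' closedCube) + θ ≤ V x}
    Tendsto (fun k : ℕ =>
        (∫ x in S, Real.exp (-(V x - Γ k * Vt x) / T k)) /
          ∫ x in cube, Real.exp (-(V x - Γ k * Vt x) / T k))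
      atTop (𝓝 0) := by
  intro cube closedCube S
  have hsub : cube ⊆ closedCube := fun x hx i _ => Ioo_subset_Icc_self (hx i (mem_univ i))
  have hcc : IsCompact closedCube := isCompact_univ_pi fun _ => isCompact_Icc
  have hne : closedCube.Nonempty := ⟨fun _ => (0:ℝ), fun i _ => by constructor <;> norm_num⟩
  have hcubeOpen : IsOpen cube := isOpen_set_pi finite_univ fun i _ => isOpen_Ioo
  set m := sInf (V '' closedCube) with hm
  obtain ⟨M₀, hM₀⟩ := hcc.exists_bound_of_continuousOn hVt
  have hM : ∀ x ∈ closedCube, |Vt x| ≤ M₀ := by simpa using hM₀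
  have hbdd : BddBelow (V '' closedCube) := (hcc.image_of_continuousOn hV).bddBelow
  have hmle : ∀ x ∈ closedCube, m ≤ V x := fun x hx => csInf_le hbdd ⟨x, hx, rfl⟩
  obtain ⟨x₀, hx₀, hmin⟩ := hcc.exists_isMinOn hne hV
  have hVx₀ : V x₀ ≤ m := le_csInf (hne.image V) (by rintro _ ⟨x, hx, rfl⟩; exact hmin hx)
  have hclosure : closure cube = closedCube := by
    show closure (Set.pi Set.univ fun _ : Fin n => Set.Ioo (0:ℝ) 1) = _
    rw [closure_pi_set]
    simp only [closure_Ioo (zero_ne_one' ℝ)]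
    rfl
  have hx₀cl : x₀ ∈ closure cube := hclosure ▸ hx₀
  have hnb : (𝓝[cube] x₀).NeBot := mem_closure_iff_nhdsWithin_neBot.mp hx₀cl
  have hev : ∀ᶠ x in 𝓝[closedCube] x₀, V x < m + θ/2 :=
    (hV x₀ hx₀) (Iio_mem_nhds (by linarith))
  have hev' : ∀ᶠ x in 𝓝[cube] x₀, V x < m + θ/2 :=
    hev.filter_mono (nhdsWithin_mono x₀ hsub)
  obtain ⟨y, hyc, hylt⟩ := (eventually_mem_nhdsWithin.and hev').exists
  set U : Set (Fin n → ℝ) := cube ∩ V ⁻¹' Iio (m + θ/2) with hU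
  have hUopen : IsOpen U :=
    (hV.mono hsub).isOpen_inter_preimage hcubeOpen isOpen_Iio
  have hyU : y ∈ U := ⟨hyc, hylt⟩
  have hUsub : U ⊆ cube := inter_subset_left
  have hUvol_pos : 0 < volume U := hUopen.measure_pos volume ⟨y, hyU⟩
  have hUvol_ne : volume U ≠ ⊤ :=
    ((measure_mono (hUsub.trans hsub)).trans_lt hcc.measure_lt_top).ne
  set c := (volume U).toReal with hcdef
  have hc : 0 < c := ENNReal.toReal_pos hUvol_pos.ne' hUvol_ne
  set D := (volume closedCube).toReal with hDdef
  have hD : 0 ≤ D := ENNReal.toReal_nonneg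
  have hcont : ∀ k, ContinuousOn (fun x => Real.exp (-(V x - Γ k * Vt x) / T k)) closedCube :=
    fun k => Real.continuous_exp.comp_continuousOn
      (((hV.sub (continuousOn_const.mul hVt)).neg).div_const _)
  have hInt : ∀ k, IntegrableOn (fun x => Real.exp (-(V x - Γ k * Vt x) / T k)) closedCube :=
    fun k => (hcont k).integrableOn_compact hcc
  have hS_sub : S ⊆ cube := fun x hx => hx.1
  have hSeq : S = cube \ (cube ∩ V ⁻¹' Iio (m + θ)) := by
    ext x
    simp only [S, mem_sep_iff, mem_diff, mem_inter_iff, mem_preimage, mem_Iio]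
    constructor
    · rintro ⟨h1, h2⟩; exact ⟨h1, fun h => absurd h.2 (not_lt.mpr h2)⟩
    · rintro ⟨h1, h2⟩
      refine ⟨h1, ?_⟩
      by_contra hlt
      exact h2 ⟨h1, not_le.mp hlt⟩
  have hSmeas : MeasurableSet S := by
    rw [hSeq]
    exact hcubeOpen.measurableSet.diff
      ((hV.mono hsub).isOpen_inter_preimage hcubeOpen isOpen_Iio).measurableSet
  set a : ℕ → ℝ := fun k => (-(m+θ) + Γ k * M₀) / T k with ha
  set b : ℕ → ℝ := fun k => (-(m + θ/2) - Γ k * M₀) / T k with hb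
  have hSvol_ne : volume S ≠ ⊤ :=
    ((measure_mono (hS_sub.trans hsub)).trans_lt hcc.measure_lt_top).ne
  have hbound : ∀ k,
      (∫ x in S, Real.exp (-(V x - Γ k * Vt x) / T k)) /
        (∫ x in cube, Real.exp (-(V x - Γ k * Vt x) / T k))
        ≤ D / c * Real.exp (a k - b k) := by
    intro k
    -- numerator upper bound
    have num_le1 : (∫ x in S, Real.exp (-(V x - Γ k * Vt x) / T k))
        ≤ ∫ _x in S, Real.exp (a k) := by
      refine setIntegral_mono_on ((hInt k).mono_set (hS_sub.trans hsub))
        (integrableOn_const hSvol_ne) hSmeas ?_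
      intro x hx
      have hVx : m + θ ≤ V x := hx.2
      have habs := abs_le.mp (hM x (hsub hx.1))
      have hmul : Γ k * Vt x ≤ Γ k * M₀ := mul_le_mul_of_nonneg_left habs.2 (hΓ k)
      have hnum : -(V x - Γ k * Vt x) ≤ -(m+θ) + Γ k * M₀ := by linarith
      have : -(V x - Γ k * Vt x) / T k ≤ a k := by
        simp only [ha]; gcongr; exact (hT k).le
      exact Real.exp_le_exp.mpr this
    have num_le : (∫ x in S, Real.exp (-(V x - Γ k * Vt x) / T k)) ≤ D * Real.exp (a k) := by
      refine num_le1.trans ?_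
      rw [setIntegral_const, smul_eq_mul]
      have hvle : (volume S).toReal ≤ D :=
        ENNReal.toReal_mono hcc.measure_lt_top.ne (measure_mono (hS_sub.trans hsub))
      exact mul_le_mul_of_nonneg_right hvle (Real.exp_pos _).le
    -- denominator lower bound
    have den_ge1 : (∫ _x in U, Real.exp (b k))
        ≤ ∫ x in U, Real.exp (-(V x - Γ k * Vt x) / T k) := by
      refine setIntegral_mono_on (integrableOn_const hUvol_ne)
        ((hInt k).mono_set (hUsub.trans hsub)) hUopen.measurableSet ?_
      intro x hx
      have hVx : V x < m + θ/2 := hx.2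
      have habs := abs_le.mp (hM x (hsub hx.1))
      have hmul : Γ k * (-M₀) ≤ Γ k * Vt x := mul_le_mul_of_nonneg_left habs.1 (hΓ k)
      have hnum : -(m + θ/2) - Γ k * M₀ ≤ -(V x - Γ k * Vt x) := by nlinarith
      have : b k ≤ -(V x - Γ k * Vt x) / T k := by
        simp only [hb]; gcongr; exact (hT k).le
      exact Real.exp_le_exp.mpr this
    have den_ge2 : (∫ x in U, Real.exp (-(V x - Γ k * Vt x) / T k))
        ≤ ∫ x in cube, Real.exp (-(V x - Γ k * Vt x) / T k) :=
      setIntegral_mono_set ((hInt k).mono_set hsub)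
        (Eventually.of_forall fun x => (Real.exp_pos _).le) hUsub.eventuallyLE
    have den_ge : c * Real.exp (b k)
        ≤ ∫ x in cube, Real.exp (-(V x - Γ k * Vt x) / T k) := by
      have := den_ge1.trans den_ge2
      rwa [setIntegral_const, smul_eq_mul] at this
    have hdpos : (0:ℝ) < c * Real.exp (b k) := mul_pos hc (Real.exp_pos _)
    calc (∫ x in S, Real.exp (-(V x - Γ k * Vt x) / T k)) /
          (∫ x in cube, Real.exp (-(V x - Γ k * Vt x) / T k))
        ≤ (D * Real.exp (a k)) / (c * Real.exp (b k)) :=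
          div_le_div₀ (by positivity) num_le hdpos den_ge
      _ = D / c * Real.exp (a k - b k) := by
          rw [Real.exp_sub]
          field_simp
  -- the upper bound tends to 0
  have hTinv : Tendsto (fun k => (T k)⁻¹) atTop atTop :=
    tendsto_inv_nhdsGT_zero.comp
      (tendsto_nhdsWithin_iff.mpr ⟨hTlim, Eventually.of_forall fun k => hT k⟩)
  have h2 : Tendsto (fun k => (-(θ/2)) * (T k)⁻¹) atTop atBot :=
    hTinv.const_mul_atTop_of_neg (by linarith)
  have h3 : Tendsto (fun k => (2*M₀) * (Γ k / T k)) atTop (𝓝 0) := by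
    simpa using hratio.const_mul (2*M₀)
  have hA : ∀ k, a k - b k = (-(θ/2)) * (T k)⁻¹ + (2*M₀) * (Γ k / T k) := by
    intro k
    rw [ha, hb]
    field_simp
    ring
  have h4 : Tendsto (fun k => a k - b k) atTop atBot :=
    (h2.atBot_add h3).congr fun k => (hA k).symm
  have h5 : Tendsto (fun k => Real.exp (a k - b k)) atTop (𝓝 0) :=
    Real.tendsto_exp_atBot.comp h4
  have hg : Tendsto (fun k => D / c * Real.exp (a k - b k)) atTop (𝓝 0) := by
    simpa using h5.const_mul (D/c)
  refine squeeze_zero (fun k => ?_) hbound hg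
  exact div_nonneg (integral_nonneg fun x => (Real.exp_pos _).le)
    (integral_nonneg fun x => (Real.exp_pos _).le)
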